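/- Let (R, m) be a complete Noetherian local ring, N a non-zero finitely generated R-module, and p ∈ Supp(N) a prime with dim R/p = 1. Then the p-adic topology on N is equivalent to the p-symbolic topology on N if and only if every associated prime of N is contained in p. -/

import Mathlib

open Ideal

/-- The set of minimal associated primes of an `R`-module `M`. -/
def mAss (R : Type*) [CommRing R] (M : Type*) [AddCommGroup M] [Module R M] : Set (Ideal R) :=
  {p | Minimal (· ∈ associatedPrimes R M) p}

/-- The `n`-th symbolic power of `I` with respect to `N`:
elements `x ∈ N` with `s • x ∈ I ^ n • N` for some `s` outside every minimal prime of
`Ass_R (N / I N)`. -/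
def symbPow (R : Type*) [CommRing R] (I : Ideal R) (N : Type*) [AddCommGroup N] [Module R N]
    (n : ℕ) : Set N :=
  {x | ∃ s : R, (∀ p ∈ mAss R (N ⧸ (I • ⊤ : Submodule R N)), s ∉ p) ∧
    s • x ∈ (I ^ n • ⊤ : Submodule R N)}

/-- The `I`-symbolic topology on `N` is equivalent to the `I`-adic topology on `N`. -/
def symbEquivAdic (R : Type*) [CommRing R] (I : Ideal R) (N : Type*) [AddCommGroup N]
    [Module R N] : Prop :=
  ∀ n : ℕ, ∃ m : ℕ, symbPow R I N m ⊆ (I ^ n • ⊤ : Submodule R N)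

set_option linter.unusedSectionVars false

section Det
variable {R M : Type*} [CommRing R] [AddCommGroup M] [Module R M]

/-- Determinant trick: if `s • M ⊆ p • M` for a f.g. module `M`, then some
`s ^ n + a` with `a ∈ p` kills `M`. -/
lemma detTrick [Module.Finite R M] (p : Ideal R) (s : R)
    (h : ∀ x : M, s • x ∈ (p • ⊤ : Submodule R M)) :
    ∃ n : ℕ, ∃ a ∈ p, ∀ x : M, (s ^ n + a) • x = 0 := by
  have hrange : LinearMap.range (s • (LinearMap.id : M →ₗ[R] M)) ≤ p • ⊤ := by
    rintro _ ⟨x, rfl⟩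
    simpa using h x
  obtain ⟨q, hq, -, hcoeff, haev⟩ :=
    LinearMap.exists_monic_and_coeff_mem_pow_and_aeval_eq_zero_of_range_le_smul R
      (s • (LinearMap.id : M →ₗ[R] M)) p hrange
  refine ⟨q.natDegree, q.eval s - s ^ q.natDegree, ?_, ?_⟩
  · have : q.eval s = ∑ k ∈ Finset.range (q.natDegree + 1), q.coeff k * s ^ k := by
      rw [Polynomial.eval_eq_sum_range]
    rw [this, Finset.sum_range_succ, hq.coeff_natDegree, one_mul, add_sub_cancel_right]
    refine Ideal.sum_mem _ fun k hk => ?_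
    refine Ideal.mul_mem_right _ _ ?_
    have hk' : k < q.natDegree := Finset.mem_range.mp hk
    have := hcoeff k
    exact (Ideal.pow_le_self (Nat.sub_ne_zero_of_lt hk')) this
  · intro x
    rw [add_comm, sub_add_cancel]
    have : (Polynomial.aeval (s • (LinearMap.id : M →ₗ[R] M)) q) x = q.eval s • x := by
      rw [Polynomial.aeval_endomorphism, Polynomial.eval_eq_sum, Polynomial.sum_def,
        Polynomial.sum_def, Finset.sum_smul]
      refine Finset.sum_congr rfl fun n _ => ?_
      rw [smul_pow]
      simp [mul_smul]
    rw [haev] at this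
    simpa using this.symm
end Det

section Sat
variable {R N : Type*} [CommRing R] [AddCommGroup N] [Module R N]

/-- Saturation of a submodule with respect to a prime `p`. -/
def satSub (p : Ideal R) (hp : p.IsPrime) (U : Submodule R N) : Submodule R N where
  carrier := {x | ∃ s : R, s ∉ p ∧ s • x ∈ U}
  add_mem' := by
    rintro a b ⟨s, hs, hsa⟩ ⟨t, ht, htb⟩
    refine ⟨s * t, fun h => ((hp.mem_or_mem h).elim hs ht), ?_⟩
    rw [smul_add]
    exact add_mem (by rw [mul_comm, mul_smul]; exact U.smul_mem _ hsa)
      (by rw [mul_smul]; exact U.smul_mem _ htb)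
  zero_mem' := ⟨1, fun h => hp.ne_top (Ideal.eq_top_of_isUnit_mem _ h isUnit_one),
    by simp⟩
  smul_mem' := by
    rintro c x ⟨s, hs, hsx⟩
    exact ⟨s, hs, by rw [smul_comm]; exact U.smul_mem _ hsx⟩

lemma le_satSub (p : Ideal R) (hp : p.IsPrime) (U : Submodule R N) : U ≤ satSub p hp U :=
  fun x hx => ⟨1, fun h => hp.ne_top (Ideal.eq_top_of_isUnit_mem _ h isUnit_one), by simpa⟩

lemma satSub_mono (p : Ideal R) (hp : p.IsPrime) {U V : Submodule R N} (h : U ≤ V) :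
    satSub p hp U ≤ satSub p hp V := by
  rintro x ⟨s, hs, hsx⟩; exact ⟨s, hs, h hsx⟩
end Sat

section Art
variable {R : Type*} [CommRing R] [IsLocalRing R]

open IsLocalRing

/-- A module killed by the maximal ideal which is finitely generated is Artinian. -/
lemma isArtinian_of_torsion_max (M : Type*) [AddCommGroup M] [Module R M] [Module.Finite R M]
    (h : ∀ a ∈ maximalIdeal R, ∀ x : M, a • x = 0) : IsArtinian R M := by
  have hM : Module.IsTorsionBySet R M ((maximalIdeal R : Ideal R) : Set R) := by
    intro x a
    exact h a a.2 x
  letI := hM.module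
  haveI : IsScalarTower R (R ⧸ maximalIdeal R) M := hM.isScalarTower
  haveI : Module.Finite (R ⧸ maximalIdeal R) M :=
    Module.Finite.of_restrictScalars_finite R _ _
  letI : Field (R ⧸ maximalIdeal R) := Ideal.Quotient.field _
  haveI : IsArtinian (R ⧸ maximalIdeal R) M := isArtinian_of_fg_of_artinian'
  let toS : Submodule R M → Submodule (R ⧸ maximalIdeal R) M := fun q =>
    { carrier := q
      add_mem' := fun ha hb => q.add_mem ha hb
      zero_mem' := q.zero_mem
      smul_mem' := by
        intro c x hx
        obtain ⟨r, rfl⟩ := Ideal.Quotient.mk_surjective c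
        have : (Ideal.Quotient.mk (maximalIdeal R) r) • x = r • x := by
          have := algebraMap_smul (R ⧸ maximalIdeal R) r x
          rwa [Ideal.Quotient.algebraMap_eq] at this
        rw [this]
        exact q.smul_mem r hx }
  have hmono : ∀ {a b : Submodule R M}, a < b → toS a < toS b := by
    intro a b hab
    refine lt_of_le_of_ne (fun x hx => hab.le hx) fun hEq => hab.ne ?_
    ext x
    exact ⟨fun hx => by have : x ∈ toS b := hEq ▸ hx; exact this,
      fun hx => by have : x ∈ toS a := hEq.symm ▸ hx; exact this⟩
  rw [isArtinian_iff]
  exact Subrelation.wf (fun {a b} h => hmono h)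
    (InvImage.wf toS ((isArtinian_iff _ _).mp this))

variable [IsNoetherianRing R]

/-- A f.g. module killed by a power of the maximal ideal is Artinian. -/
lemma isArtinian_of_torsion_pow (k : ℕ) (M : Type*) [AddCommGroup M] [Module R M]
    [Module.Finite R M]
    (h : ((maximalIdeal R) ^ k • ⊤ : Submodule R M) = ⊥) : IsArtinian R M := by
  induction k generalizing M with
  | zero =>
    haveI : Subsingleton M := by
      refine subsingleton_of_forall_eq 0 fun x => ?_
      have : x ∈ ((maximalIdeal R) ^ 0 • ⊤ : Submodule R M) := by
        simp
      rw [h] at this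
      simpa using this
    infer_instance
  | succ k ih =>
    set S : Submodule R M := (maximalIdeal R) ^ k • ⊤ with hS
    haveI : IsArtinian R (M ⧸ S) := by
      refine ih (M ⧸ S) ?_
      have : ((maximalIdeal R) ^ k • ⊤ : Submodule R (M ⧸ S)) = Submodule.map S.mkQ S := by
        rw [Submodule.map_smul'', Submodule.map_top, Submodule.range_mkQ, hS]
      rw [this, eq_bot_iff]
      rintro y ⟨z, hz, rfl⟩
      simpa [Submodule.Quotient.mk_eq_zero] using hz
    haveI : IsArtinian R S := by
      refine isArtinian_of_torsion_max _ fun a ha x => ?_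
      have hval : a • (x : M) = 0 := by
        have hmem : a • (x : M) ∈ ((maximalIdeal R) ^ (k + 1) • ⊤ : Submodule R M) := by
          rw [pow_succ, mul_comm, ← Ideal.smul_eq_mul, Submodule.smul_assoc]
          exact Submodule.smul_mem_smul ha x.2
        rw [h] at hmem
        simpa using hmem
      exact Subtype.ext (by simpa using hval)
    exact isArtinian_of_range_eq_ker S.subtype S.mkQ (by
      rw [Submodule.ker_mkQ, Submodule.range_subtype])
end Art

section Precomplete
variable {R : Type*} [CommRing R] (I : Ideal R)

lemma pi_mem_smul_top_iff {n : ℕ} (k : ℕ) (x : Fin n → R) :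
    x ∈ (I ^ k • ⊤ : Submodule R (Fin n → R)) ↔ ∀ i, x i ∈ I ^ k := by
  constructor
  · intro hx i
    refine Submodule.smul_induction_on hx (fun a ha v _ => ?_) (fun u v hu hv => ?_)
    · exact Ideal.mul_mem_right _ _ ha
    · exact Ideal.add_mem _ hu hv
  · intro hx
    rw [pi_eq_sum_univ x]
    exact Submodule.sum_mem _ fun i _ =>
      Submodule.smul_mem_smul (hx i) Submodule.mem_top

lemma isPrecomplete_pi [IsPrecomplete I R] (n : ℕ) : IsPrecomplete I (Fin n → R) := by
  constructor
  intro f hf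
  have hcoord : ∀ i : Fin n, ∃ L : R, ∀ m, f m i ≡ L [SMOD (I ^ m • ⊤ : Submodule R R)] := by
    intro i
    refine IsPrecomplete.prec ‹_› (f := fun m => f m i) ?_
    intro a b hab
    show f a i ≡ f b i [SMOD (I ^ a • ⊤ : Submodule R R)]
    rw [SModEq.sub_mem]
    have h0 := hf hab
    rw [SModEq.sub_mem] at h0
    have := (pi_mem_smul_top_iff I a (f a - f b)).mp h0 i
    simpa using this
  choose L hL using hcoord
  refine ⟨L, fun m => ?_⟩
  rw [SModEq.sub_mem]
  rw [pi_mem_smul_top_iff]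
  intro i
  have := (hL i m)
  rw [SModEq.sub_mem] at this
  simpa using this

lemma isPrecomplete_of_finite (M : Type*) [AddCommGroup M] [Module R M] [Module.Finite R M]
    [IsPrecomplete I R] : IsPrecomplete I M := by
  obtain ⟨n, π, hπ⟩ := Module.Finite.exists_fin' R M
  haveI := isPrecomplete_pi I n
  constructor
  intro f hf
  -- lift the Cauchy sequence
  have hmaptop : ∀ k : ℕ, Submodule.map π (I ^ k • ⊤ : Submodule R (Fin n → R)) =
      (I ^ k • ⊤ : Submodule R M) := by
    intro k
    rw [Submodule.map_smul'', Submodule.map_top, LinearMap.range_eq_top.mpr hπ]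
  have hd : ∀ k : ℕ, ∃ d : Fin n → R, d ∈ (I ^ k • ⊤ : Submodule R (Fin n → R)) ∧
      π d = f (k + 1) - f k := by
    intro k
    have : f (k + 1) - f k ∈ (I ^ k • ⊤ : Submodule R M) := by
      have := hf (Nat.le_succ k)
      rw [SModEq.sub_mem] at this
      simpa using (neg_mem this : -(f k - f (k+1)) ∈ _)
    rw [← hmaptop k] at this
    obtain ⟨d, hd1, hd2⟩ := this
    exact ⟨d, hd1, hd2⟩
  choose d hd1 hd2 using hd
  obtain ⟨u0, hu0⟩ := hπ (f 0)
  set u : ℕ → (Fin n → R) := fun k => u0 + ∑ j ∈ Finset.range k, d j with hu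
  have hπu : ∀ k, π (u k) = f k := by
    intro k
    induction k with
    | zero => simp [hu, hu0]
    | succ k ih =>
      have huk : u (k + 1) = u k + d k := by
        simp [hu, Finset.sum_range_succ, add_assoc]
      rw [huk, map_add, ih, hd2 k]
      abel
  have hucauchy : ∀ {a b : ℕ}, a ≤ b →
      u a ≡ u b [SMOD (I ^ a • ⊤ : Submodule R (Fin n → R))] := by
    intro a b hab
    rw [SModEq.sub_mem, hu]
    simp only [add_sub_add_left_eq_sub]
    have hIco : ∑ j ∈ Finset.range b, d j - ∑ j ∈ Finset.range a, d j
        = ∑ j ∈ Finset.Ico a b, d j := (Finset.sum_Ico_eq_sub _ hab).symm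
    have : ∑ j ∈ Finset.range a, d j - ∑ j ∈ Finset.range b, d j
        = -∑ j ∈ Finset.Ico a b, d j := by rw [← hIco]; abel
    rw [this]
    refine neg_mem (Submodule.sum_mem _ fun j hj => ?_)
    have hja : a ≤ j := (Finset.mem_Ico.mp hj).1
    exact Submodule.smul_mono_left (Ideal.pow_le_pow_right hja) (hd1 j)
  obtain ⟨L, hL⟩ := IsPrecomplete.prec ‹IsPrecomplete I (Fin n → R)› @hucauchy
  refine ⟨π L, fun k => ?_⟩
  rw [SModEq.sub_mem, ← hπu k, ← map_sub, ← hmaptop k]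
  have := hL k
  rw [SModEq.sub_mem] at this
  exact Submodule.mem_map_of_mem this
end Precomplete

section Transfer
variable {R : Type*} [CommRing R]

/-- Universe-polymorphic Krull intersection theorem. -/
lemma krull_iInf_eq_bot [IsNoetherianRing R] [IsLocalRing R] (I : Ideal R) (hI : I ≠ ⊤)
    (M : Type*) [AddCommGroup M] [Module R M] [Module.Finite R M] :
    (⨅ j : ℕ, (I ^ j • ⊤ : Submodule R M)) = ⊥ := by
  obtain ⟨n, π, hπ⟩ := Module.Finite.exists_fin' R M
  let M₀ := (Fin n → R) ⧸ LinearMap.ker π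
  let e : M₀ ≃ₗ[R] M := π.quotKerEquivOfSurjective hπ
  have hmap : ∀ j : ℕ, Submodule.map (e : M₀ →ₗ[R] M) (I ^ j • ⊤ : Submodule R M₀)
      = (I ^ j • ⊤ : Submodule R M) := by
    intro j
    rw [Submodule.map_smul'', Submodule.map_top, LinearEquiv.range]
  have h₀ := Ideal.iInf_pow_smul_eq_bot_of_isLocalRing (M := M₀) (I := I) hI
  rw [eq_bot_iff]
  intro x hx
  rw [Submodule.mem_iInf] at hx
  have : e.symm x ∈ (⨅ j : ℕ, (I ^ j • ⊤ : Submodule R M₀)) := by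
    rw [Submodule.mem_iInf]
    intro j
    have := hx j
    rw [← hmap j] at this
    obtain ⟨y, hy, hyx⟩ := this
    have : e.symm x = y := by rw [← hyx]; exact e.symm_apply_apply y
    rwa [this]
  rw [h₀] at this
  have : e.symm x = 0 := by simpa using this
  have := congrArg e this
  simpa using this

/-- Universe-polymorphic consequence of the Artin-Rees lemma. -/
lemma artin_rees' [IsNoetherianRing R] (I : Ideal R)
    (M : Type*) [AddCommGroup M] [Module R M] [Module.Finite R M] (T : Submodule R M) :
    ∃ c : ℕ, ∀ t : ℕ, ((I ^ (c + t) • ⊤ : Submodule R M) ⊓ T) ≤ I ^ t • T := by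
  obtain ⟨n, π, hπ⟩ := Module.Finite.exists_fin' R M
  let M₀ := (Fin n → R) ⧸ LinearMap.ker π
  let e : M₀ ≃ₗ[R] M := π.quotKerEquivOfSurjective hπ
  have hmap : ∀ j : ℕ, Submodule.map (e : M₀ →ₗ[R] M) (I ^ j • ⊤ : Submodule R M₀)
      = (I ^ j • ⊤ : Submodule R M) := by
    intro j
    rw [Submodule.map_smul'', Submodule.map_top, LinearEquiv.range]
  set T₀ : Submodule R M₀ := Submodule.comap (e : M₀ →ₗ[R] M) T with hT₀
  have hmapT : Submodule.map (e : M₀ →ₗ[R] M) T₀ = T := by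
    rw [hT₀, Submodule.map_comap_eq, LinearEquiv.range, top_inf_eq]
  obtain ⟨c, hc⟩ := Ideal.exists_pow_inf_eq_pow_smul I T₀
  refine ⟨c, fun t => ?_⟩
  rintro x ⟨hx1, hx2⟩
  have h1 : e.symm x ∈ (I ^ (c + t) • ⊤ : Submodule R M₀) := by
    rw [← hmap (c + t)] at hx1
    obtain ⟨y, hy, hyx⟩ := hx1
    have : e.symm x = y := by rw [← hyx]; exact e.symm_apply_apply y
    rwa [this]
  have h2 : e.symm x ∈ T₀ := by
    rw [hT₀, Submodule.mem_comap]
    simpa using hx2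
  have h3 : e.symm x ∈ I ^ t • T₀ := by
    have := hc (c + t) (by omega)
    rw [show c + t - c = t from by omega] at this
    have hmem : e.symm x ∈ (I ^ (c + t) • ⊤ : Submodule R M₀) ⊓ T₀ := ⟨h1, h2⟩
    rw [this] at hmem
    exact Submodule.smul_mono le_rfl inf_le_right hmem
  have : x ∈ Submodule.map (e : M₀ →ₗ[R] M) (I ^ t • T₀) := by
    refine ⟨e.symm x, h3, by simp⟩
  rwa [Submodule.map_smul'', hmapT] at this
end Transfer


section Chevalley
open IsLocalRing
variable {R : Type*} [CommRing R] [IsNoetherianRing R] [IsLocalRing R]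
variable {M : Type*} [AddCommGroup M] [Module R M] [Module.Finite R M]

/-- Chevalley's lemma: over a complete Noetherian local ring, a decreasing sequence of
submodules with zero intersection is cofinal with the `m`-adic filtration. -/
lemma chevalley [IsPrecomplete (maximalIdeal R) M]
    (Mseq : ℕ → Submodule R M) (hanti : ∀ {a b : ℕ}, a ≤ b → Mseq b ≤ Mseq a)
    (hint : (⨅ n, Mseq n) = ⊥) (k₀ : ℕ) :
    ∃ n, Mseq n ≤ ((maximalIdeal R) ^ k₀ • ⊤ : Submodule R M) := by
  by_contra hcon
  push_neg at hcon
  set m := maximalIdeal R with hm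
  -- stabilization of the chains modulo m^j
  have hstab : ∀ j : ℕ, ∃ n₀ : ℕ, ∀ n, n₀ ≤ n →
      Mseq n ⊔ (m ^ j • ⊤ : Submodule R M) = Mseq n₀ ⊔ (m ^ j • ⊤ : Submodule R M) := by
    intro j
    haveI : IsArtinian R (M ⧸ (m ^ j • ⊤ : Submodule R M)) := by
      refine isArtinian_of_torsion_pow j _ ?_
      have : (m ^ j • ⊤ : Submodule R (M ⧸ (m ^ j • ⊤ : Submodule R M))) =
          Submodule.map (m ^ j • ⊤ : Submodule R M).mkQ (m ^ j • ⊤ : Submodule R M) := by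
        rw [Submodule.map_smul'', Submodule.map_top, Submodule.range_mkQ]
      rw [this, eq_bot_iff]
      rintro y ⟨z, hz, rfl⟩
      simpa [Submodule.Quotient.mk_eq_zero] using hz
    set Q := (m ^ j • ⊤ : Submodule R M)
    obtain ⟨n₀, hn₀⟩ := (monotone_stabilizes_iff_artinian.mpr ‹_›)
      ⟨fun n => OrderDual.toDual (Submodule.map Q.mkQ (Mseq n)),
        fun a b hab => Submodule.map_mono (hanti hab)⟩
    refine ⟨n₀, fun n hn => ?_⟩
    have hQmap : Submodule.map Q.mkQ (Mseq n) = Submodule.map Q.mkQ (Mseq n₀) :=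
      congrArg OrderDual.ofDual (hn₀ n hn).symm
    have h1 : ∀ nn : ℕ, Submodule.comap Q.mkQ (Submodule.map Q.mkQ (Mseq nn)) =
        Mseq nn ⊔ Q := fun nn => by rw [Submodule.comap_map_mkQ, sup_comm]
    rw [← h1 n, ← h1 n₀, hQmap]
  choose n₀ hn₀ using hstab
  set W : ℕ → Submodule R M := fun j => Mseq (n₀ j) ⊔ (m ^ j • ⊤ : Submodule R M) with hW
  have hWle : ∀ j n, W j ≤ Mseq n ⊔ (m ^ j • ⊤ : Submodule R M) := by
    intro j n
    rcases le_total n (n₀ j) with h | h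
    · exact sup_le_sup_right (hanti h) _
    · exact le_of_eq (hn₀ j n h).symm
  have hstep : ∀ j, ∀ x ∈ W j, ∃ y ∈ W (j + 1), x - y ∈ (m ^ j • ⊤ : Submodule R M) := by
    intro j x hx
    set n := max (n₀ j) (n₀ (j + 1))
    have hxn : x ∈ Mseq n ⊔ (m ^ j • ⊤ : Submodule R M) := by
      have := (hn₀ j n (le_max_left _ _)).symm
      rw [hW] at hx
      exact this ▸ hx
    obtain ⟨a, ha, b, hb, rfl⟩ := Submodule.mem_sup.mp hxn
    refine ⟨a, ?_, by simpa using hb⟩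
    have h2 : a ∈ Mseq n ⊔ (m ^ (j+1) • ⊤ : Submodule R M) := Submodule.mem_sup_left ha
    rw [hn₀ (j+1) n (le_max_right _ _)] at h2
    exact h2
  -- starting point
  obtain ⟨x₀, hx₀W, hx₀⟩ : ∃ x₀ ∈ W k₀, x₀ ∉ (m ^ k₀ • ⊤ : Submodule R M) := by
    obtain ⟨z, hz1, hz2⟩ := SetLike.not_le_iff_exists.mp (hcon (n₀ k₀))
    exact ⟨z, Submodule.mem_sup_left hz1, hz2⟩
  -- build the Cauchy sequence by dependent recursion
  let g : (j : ℕ) → {v : M // v ∈ W (k₀ + j)} := fun j =>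
    Nat.rec ⟨x₀, hx₀W⟩
      (fun j ihg => ⟨Classical.choose (hstep (k₀ + j) ihg.1 ihg.2),
        (Classical.choose_spec (hstep (k₀ + j) ihg.1 ihg.2)).1⟩) j
  have hgdiff : ∀ j : ℕ, (g j).1 - (g (j+1)).1 ∈ (m ^ (k₀ + j) • ⊤ : Submodule R M) :=
    fun j => (Classical.choose_spec (hstep (k₀ + j) (g j).1 (g j).2)).2
  set f : ℕ → M := fun j => (g j).1 with hf
  have htel : ∀ a b : ℕ, a ≤ b → f a - f b ∈ (m ^ (k₀ + a) • ⊤ : Submodule R M) := by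
    intro a b hab
    induction b, hab using Nat.le_induction with
    | base => simp
    | succ b hab ih =>
      have : f a - f (b + 1) = (f a - f b) + (f b - f (b + 1)) := by abel
      rw [this]
      refine add_mem ih ?_
      exact Submodule.smul_mono_left
        (Ideal.pow_le_pow_right (by omega)) (hgdiff b)
  obtain ⟨L, hL⟩ := IsPrecomplete.prec ‹IsPrecomplete m M›
    (f := f) (by
      intro a b hab
      rw [SModEq.sub_mem]
      exact Submodule.smul_mono_left (Ideal.pow_le_pow_right (by omega)) (htel a b hab))
  have hLMseq : ∀ nn : ℕ, L ∈ Mseq nn := by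
    intro nn
    have hsup : ∀ j : ℕ, L ∈ Mseq nn ⊔ (m ^ j • ⊤ : Submodule R M) := by
      intro j
      have h1 : f j - L ∈ (m ^ j • ⊤ : Submodule R M) := by
        have := hL j; rwa [SModEq.sub_mem] at this
      have h2 : f j ∈ Mseq nn ⊔ (m ^ j • ⊤ : Submodule R M) := by
        refine (hWle (k₀ + j) nn).trans ?_ (g j).2
        exact sup_le_sup_left (Submodule.smul_mono_left
          (Ideal.pow_le_pow_right (by omega))) _
      have : L = f j - (f j - L) := by abel
      rw [this]
      exact sub_mem h2 (Submodule.mem_sup_right h1)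
    -- Krull intersection in the quotient
    have hker : Submodule.Quotient.mk (p := Mseq nn) L = 0 := by
      have hq : ∀ j : ℕ, Submodule.Quotient.mk (p := Mseq nn) L ∈
          (m ^ j • ⊤ : Submodule R (M ⧸ Mseq nn)) := by
        intro j
        obtain ⟨a, ha, b, hb, hab⟩ := Submodule.mem_sup.mp (hsup j)
        have : Submodule.Quotient.mk (p := Mseq nn) L =
            Submodule.Quotient.mk (p := Mseq nn) b := by
          rw [Submodule.Quotient.eq]
          rw [show L - b = a from by rw [← hab]; abel]
          exact ha
        rw [this]
        have : (m ^ j • ⊤ : Submodule R (M ⧸ Mseq nn)) =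
            Submodule.map (Mseq nn).mkQ (m ^ j • ⊤ : Submodule R M) := by
          rw [Submodule.map_smul'', Submodule.map_top, Submodule.range_mkQ]
        rw [this]
        exact Submodule.mem_map_of_mem hb
      have hbot := krull_iInf_eq_bot m
        (Ideal.IsMaximal.ne_top (maximalIdeal.isMaximal R)) (M ⧸ Mseq nn)
      have : Submodule.Quotient.mk (p := Mseq nn) L ∈
          (⨅ j : ℕ, (m ^ j • ⊤ : Submodule R (M ⧸ Mseq nn))) := by
        exact Submodule.mem_iInf _ |>.mpr hq
      rw [hbot] at this
      simpa using this
    rwa [Submodule.Quotient.mk_eq_zero] at hker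
  have hL0 : L = 0 := by
    have : L ∈ (⨅ n, Mseq n) := Submodule.mem_iInf _ |>.mpr hLMseq
    rw [hint] at this
    simpa using this
  -- contradiction
  apply hx₀
  have h1 : f k₀ ∈ (m ^ k₀ • ⊤ : Submodule R M) := by
    have := hL k₀
    rw [SModEq.sub_mem, hL0, sub_zero] at this
    exact this
  have h2 : f 0 - f k₀ ∈ (m ^ k₀ • ⊤ : Submodule R M) := by
    simpa using htel 0 k₀ (Nat.zero_le _)
  have : f 0 ∈ (m ^ k₀ • ⊤ : Submodule R M) := by
    have := add_mem h2 h1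
    simpa using this
  exact this
end Chevalley

section Ass
variable {R N : Type*} [CommRing R] [AddCommGroup N] [Module R N] [Module.Finite R N]
variable {p : Ideal R}

lemma smul_ne_zero_quot (hp : p.IsPrime) (hpsupp : Module.annihilator R N ≤ p)
    {s : R} (hs : s ∉ p) : ¬ ∀ x : N ⧸ (p • ⊤ : Submodule R N), s • x = 0 := by
  intro hzero
  have h : ∀ x : N, s • x ∈ (p • ⊤ : Submodule R N) := by
    intro x
    have := hzero (Submodule.Quotient.mk x)
    rwa [← Submodule.Quotient.mk_smul, Submodule.Quotient.mk_eq_zero] at this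
  obtain ⟨n, a, ha, hkill⟩ := detTrick p s h
  have hann : s ^ n + a ∈ Module.annihilator R N := Module.mem_annihilator.mpr hkill
  have hsp : s ^ n ∈ p := by
    have h1 : s ^ n = (s ^ n + a) - a := by ring
    rw [h1]
    exact Ideal.sub_mem _ (hpsupp hann) ha
  exact hs (hp.mem_of_pow_mem _ hsp)

lemma p_le_ann_quot (x : N ⧸ (p • ⊤ : Submodule R N)) {a : R} (ha : a ∈ p) : a • x = 0 := by
  obtain ⟨y, rfl⟩ := Submodule.Quotient.mk_surjective _ x
  rw [← Submodule.Quotient.mk_smul, Submodule.Quotient.mk_eq_zero]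
  exact Submodule.smul_mem_smul ha Submodule.mem_top

lemma p_isAssociated (hp : p.IsPrime) (hpsupp : Module.annihilator R N ≤ p) :
    IsAssociatedPrime p (N ⧸ (p • ⊤ : Submodule R N)) := by
  classical
  have hex : ∃ x : N ⧸ (p • ⊤ : Submodule R N), ∀ s : R, s • x = 0 → s ∈ p := by
    by_contra hc
    push_neg at hc
    obtain ⟨S, hS⟩ := (Module.Finite.fg_top (R := R) (M := N ⧸ (p • ⊤ : Submodule R N)) : (⊤ : Submodule R _).FG)
    choose sf hsf1 hsf2 using hc
    set s : R := ∏ x ∈ S, sf x with hsdef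
    have hsnp : s ∉ p := by
      have : s ∈ p.primeCompl := Submonoid.prod_mem p.primeCompl (fun x _ => hsf2 x)
      exact this
    refine smul_ne_zero_quot hp hpsupp hsnp fun y => ?_
    have hgen : ∀ x ∈ S, s • x = 0 := by
      intro x hx
      rw [hsdef, ← Finset.prod_erase_mul S sf hx, mul_smul, hsf1 x, smul_zero]
    have hy : y ∈ Submodule.span R (↑S : Set _) := by rw [hS]; trivial
    induction hy using Submodule.span_induction with
    | mem z hz => exact hgen z hz
    | zero => simp
    | add u v _ _ hu hv => rw [smul_add, hu, hv, add_zero]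
    | smul r u _ hu => rw [smul_comm, hu, smul_zero]
  obtain ⟨x, hx⟩ := hex
  refine ⟨hp, x, ?_⟩
  apply le_antisymm
  · intro a ha
    apply Ideal.le_radical
    rw [Submodule.mem_colon_singleton, Submodule.mem_bot]
    exact p_le_ann_quot x ha
  · intro a ha
    obtain ⟨k, hk⟩ := ha
    rw [Submodule.mem_colon_singleton, Submodule.mem_bot] at hk
    exact hp.mem_of_pow_mem _ (hx _ hk)

lemma mAss_quot_eq (hp : p.IsPrime) (hpsupp : Module.annihilator R N ≤ p) :
    {q : Ideal R | Minimal (· ∈ associatedPrimes R (N ⧸ (p • ⊤ : Submodule R N))) q} = {p} := by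
  have hassp : p ∈ associatedPrimes R (N ⧸ (p • ⊤ : Submodule R N)) :=
    p_isAssociated hp hpsupp
  have hple : ∀ q ∈ associatedPrimes R (N ⧸ (p • ⊤ : Submodule R N)), p ≤ q := by
    rintro q ⟨hq, x, rfl⟩ a ha
    apply Ideal.le_radical
    rw [Submodule.mem_colon_singleton, Submodule.mem_bot]
    exact p_le_ann_quot x ha
  ext q
  constructor
  · rintro ⟨hq1, hq2⟩
    exact le_antisymm (hq2 hassp (hple q hq1)) (hple q hq1)
  · rintro rfl
    exact ⟨hassp, fun y hy hyp => hple y hy⟩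
end Ass

section Dim
open IsLocalRing

lemma prime_lt_eq_max {R : Type*} [CommRing R] [IsLocalRing R] {p q : Ideal R}
    (hp : p.IsPrime) (hq : q.IsPrime) (hdim : ringKrullDim (R ⧸ p) = 1)
    (hlt : p < q) : q = maximalIdeal R := by
  by_contra hne
  have hqm : q < maximalIdeal R :=
    lt_of_le_of_ne (le_maximalIdeal hq.ne_top) hne
  haveI : p.IsPrime := hp
  -- build a chain of length 2 in Spec (R ⧸ p)
  let mk := Ideal.Quotient.mk p
  have hker : RingHom.ker mk = p := Ideal.mk_ker
  have hsurj : Function.Surjective mk := Ideal.Quotient.mk_surjective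
  have hqprime : (q.map mk).IsPrime :=
    Ideal.map_isPrime_of_surjective hsurj (by rw [hker]; exact hlt.le)
  have hmprime : ((maximalIdeal R).map mk).IsPrime :=
    Ideal.map_isPrime_of_surjective hsurj
      (by rw [hker]; exact hlt.le.trans (le_maximalIdeal hq.ne_top))
  have hcomap : ∀ I : Ideal R, p ≤ I → Ideal.comap mk (I.map mk) = I := by
    intro I hI
    rw [Ideal.comap_map_of_surjective mk hsurj, ← RingHom.ker_eq_comap_bot, hker,
      sup_eq_left.mpr hI]
  have hbotq : (⊥ : Ideal (R ⧸ p)) < q.map mk := by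
    refine lt_of_le_of_ne bot_le fun h => ?_
    obtain ⟨a, haq, hap⟩ := SetLike.exists_of_lt hlt
    have : mk a ∈ q.map mk := Ideal.mem_map_of_mem mk haq
    rw [← h] at this
    rw [Submodule.mem_bot] at this
    exact hap (by rwa [Ideal.Quotient.eq_zero_iff_mem] at this)
  have hqmq : q.map mk < (maximalIdeal R).map mk := by
    refine lt_of_le_of_ne (Ideal.map_mono hqm.le) fun h => ?_
    have := congrArg (Ideal.comap mk) h
    rw [hcomap q hlt.le, hcomap _ (hlt.le.trans (le_maximalIdeal hq.ne_top))] at this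
    exact hqm.ne this
  let A : PrimeSpectrum (R ⧸ p) := ⟨⊥, Ideal.bot_prime⟩
  let B : PrimeSpectrum (R ⧸ p) := ⟨q.map mk, hqprime⟩
  let C : PrimeSpectrum (R ⧸ p) := ⟨(maximalIdeal R).map mk, hmprime⟩
  have hAB : A < B := (PrimeSpectrum.asIdeal_lt_asIdeal A B).mp hbotq
  have hBC : B < C := (PrimeSpectrum.asIdeal_lt_asIdeal B C).mp hqmq
  let c : LTSeries (PrimeSpectrum (R ⧸ p)) :=
    { length := 2
      toFun := ![A, B, C]
      step := by
        intro i
        fin_cases i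
        · simpa using hAB
        · simpa using hBC }
  have := Order.LTSeries.length_le_krullDim c
  rw [show c.length = 2 from rfl] at this
  rw [ringKrullDim] at hdim
  rw [hdim] at this
  norm_num at this
end Dim

section Main
open IsLocalRing
variable {R N : Type*} [CommRing R] [IsNoetherianRing R] [IsLocalRing R]
  [AddCommGroup N] [Module R N] [Module.Finite R N]
variable {p : Ideal R}

lemma sat_inf_sup_le (hp : p.IsPrime)
    (hmax : ∀ q : Ideal R, q.IsPrime → p < q → q = maximalIdeal R) (n : ℕ) :
    ∃ k : ℕ, satSub p hp ((p ^ n • ⊤ : Submodule R N)) ⊓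
      ((p ^ n • ⊤ : Submodule R N) ⊔ ((maximalIdeal R) ^ k • ⊤ : Submodule R N)) ≤
      (p ^ n • ⊤ : Submodule R N) := by
  classical
  rcases Nat.eq_zero_or_pos n with rfl | hn
  · exact ⟨0, by simp⟩
  set T := satSub p hp ((p ^ n • ⊤ : Submodule R N)) with hT
  -- Step A: a power of the maximal ideal sends T into p^n • ⊤
  have hstepA : ∃ t : ℕ, ∀ a ∈ (maximalIdeal R) ^ t, ∀ x ∈ T,
      a • x ∈ (p ^ n • ⊤ : Submodule R N) := by
    have hsingle : ∀ x ∈ T, ∃ t : ℕ, ∀ a ∈ (maximalIdeal R) ^ t,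
        a • x ∈ (p ^ n • ⊤ : Submodule R N) := by
      rintro x ⟨s, hs, hsx⟩
      set J : Ideal R := (p ^ n • ⊤ : Submodule R N).colon (Submodule.span R {x}) with hJ
      have hsJ : s ∈ J := by
        rw [hJ, Submodule.mem_colon]
        intro y hy
        induction hy using Submodule.span_induction with
        | mem z hz =>
          rw [Set.mem_singleton_iff] at hz
          rw [hz]; exact hsx
        | zero => simp
        | add u v _ _ hu hv => rw [smul_add]; exact add_mem hu hv
        | smul r u _ hu => rw [smul_comm]; exact Submodule.smul_mem _ r hu
      have hpnJ : p ^ n ≤ J := by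
        intro a ha
        rw [hJ, Submodule.mem_colon]
        intro y _
        exact Submodule.smul_mem_smul ha Submodule.mem_top
      have hmrad : maximalIdeal R ≤ J.radical := by
        rw [Ideal.radical_eq_sInf]
        refine le_sInf ?_
        rintro q ⟨hJq, hq⟩
        have hpq : p ≤ q := by
          intro a ha
          exact hq.mem_of_pow_mem n (hJq (hpnJ (Ideal.pow_mem_pow ha n)))
        have hplt : p < q := lt_of_le_of_ne hpq fun h => hs (h ▸ hJq hsJ)
        rw [hmax q hq hplt]
      obtain ⟨t0, ht0⟩ := Ideal.exists_radical_pow_le_of_fg J (IsNoetherian.noetherian _)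
      refine ⟨t0, fun a ha => ?_⟩
      have : a ∈ J := ht0 ((Ideal.pow_right_mono hmrad t0) ha)
      rw [hJ, Submodule.mem_colon] at this
      exact this x (Submodule.mem_span_singleton_self x)
    obtain ⟨S, hS⟩ := IsNoetherian.noetherian T
    have hSmem : ∀ x ∈ S, x ∈ T := fun x hx => hS ▸ Submodule.subset_span hx
    choose tf htf using fun (x : S) => hsingle x.1 (hSmem x.1 x.2)
    set t := S.attach.sup fun x => tf ⟨x.1, x.2⟩
    refine ⟨t, fun a ha x hx => ?_⟩
    rw [← hS] at hx
    induction hx using Submodule.span_induction with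
    | mem z hz =>
      refine htf ⟨z, hz⟩ a ?_
      refine Ideal.pow_le_pow_right ?_ ha
      exact Finset.le_sup (f := fun x : {x // x ∈ S} => tf ⟨x.1, x.2⟩)
        (Finset.mem_attach S ⟨z, hz⟩)
    | zero => simp
    | add u v _ _ hu hv => rw [smul_add]; exact add_mem hu hv
    | smul r u _ hu => rw [smul_comm]; exact Submodule.smul_mem _ r hu
  obtain ⟨t, ht⟩ := hstepA
  -- Step B: Artin-Rees
  obtain ⟨c, hc⟩ := artin_rees' (maximalIdeal R) N T
  refine ⟨c + t, ?_⟩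
  have hinfle : ((maximalIdeal R) ^ (c + t) • ⊤ : Submodule R N) ⊓ T ≤
      (p ^ n • ⊤ : Submodule R N) := by
    refine (hc t).trans ?_
    rw [Submodule.smul_le]
    intro a ha x hx
    exact ht a ha x hx
  rintro x ⟨hxT, hxsup⟩
  obtain ⟨a, ha, b, hb, rfl⟩ := Submodule.mem_sup.mp hxsup
  have hbT : b ∈ T := by
    have haT : a ∈ T := le_satSub p hp _ ha
    have : a + b - a ∈ T := sub_mem hxT haT
    simpa using this
  have : b ∈ (p ^ n • ⊤ : Submodule R N) := hinfle ⟨hb, hbT⟩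
  exact add_mem ha this

lemma iInf_sat_eq_bot (hp : p.IsPrime)
    (hAss : ∀ z ∈ associatedPrimes R N, z ≤ p) :
    (⨅ j : ℕ, satSub p hp ((p ^ j • ⊤ : Submodule R N))) = ⊥ := by
  classical
  set C := (⨅ j : ℕ, satSub p hp ((p ^ j • ⊤ : Submodule R N))) with hC
  by_contra hne
  obtain ⟨x₀, hx₀C, hx₀⟩ := Submodule.exists_mem_ne_zero_of_ne_bot hne
  -- every element of C is saturated into p • C
  obtain ⟨c, hc⟩ := artin_rees' p N C
  have hsat : ∀ x ∈ C, ∃ s : R, s ∉ p ∧ s • x ∈ p • C := by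
    intro x hx
    have : x ∈ satSub p hp ((p ^ (c + 1) • ⊤ : Submodule R N)) := by
      rw [hC] at hx
      exact (iInf_le _ (c + 1) : C ≤ _) hx
    obtain ⟨s, hs, hsx⟩ := this
    refine ⟨s, hs, ?_⟩
    have : s • x ∈ (p ^ (c + 1) • ⊤ : Submodule R N) ⊓ C := ⟨hsx, C.smul_mem s hx⟩
    have := hc 1 this
    simpa using this
  -- single s works for all of C
  obtain ⟨S, hS⟩ := IsNoetherian.noetherian C
  have hSmem : ∀ x ∈ S, x ∈ C := fun x hx => hS ▸ Submodule.subset_span hx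
  choose sf hsf1 hsf2 using fun (x : S) => hsat x.1 (hSmem x.1 x.2)
  set s : R := ∏ x ∈ S.attach, sf x with hsdef
  have hsnp : s ∉ p :=
    (Submonoid.prod_mem p.primeCompl fun x _ => hsf1 x : s ∈ p.primeCompl)
  have hsC : ∀ x ∈ C, s • x ∈ p • C := by
    intro x hx
    rw [← hS] at hx
    induction hx using Submodule.span_induction with
    | mem z hz =>
      rw [hsdef, ← Finset.prod_erase_mul S.attach sf (Finset.mem_attach S ⟨z, hz⟩), mul_smul]
      exact Submodule.smul_mem _ _ (hsf2 ⟨z, hz⟩)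
    | zero => simp
    | add u v _ _ hu hv => rw [smul_add]; exact add_mem hu hv
    | smul r u _ hu => rw [smul_comm]; exact Submodule.smul_mem _ r hu
  -- determinant trick on C
  haveI : Module.Finite R C := Module.Finite.iff_fg.mpr (IsNoetherian.noetherian C)
  have hdt : ∀ v : C, s • v ∈ (p • ⊤ : Submodule R C) := by
    intro v
    have hv : s • v.1 ∈ p • C := hsC v.1 v.2
    have hmap : Submodule.map C.subtype (p • ⊤ : Submodule R C) = p • C := by
      rw [Submodule.map_smul'', Submodule.map_subtype_top]
    rw [← hmap] at hv
    obtain ⟨w, hw, hwv⟩ := hv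
    have : w = s • v := Subtype.ext (by simpa using hwv)
    rwa [this] at hw
  obtain ⟨n, a, ha, hkill⟩ := detTrick p s hdt
  have hx0 : (s ^ n + a) • x₀ = 0 := by
    have := hkill ⟨x₀, hx₀C⟩
    have := congrArg (C.subtype) this
    simpa using this
  obtain ⟨P, hP, hannP⟩ := exists_le_isAssociatedPrime_of_isNoetherianRing R x₀ hx₀
  have : s ^ n + a ∈ P := hannP (Submodule.mem_colon_singleton.mpr (by rw [hx0]; exact Submodule.zero_mem _))
  have hsnp' : s ^ n ∈ p := by
    have h1 : s ^ n + a ∈ p := hAss P hP this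
    have : s ^ n = (s ^ n + a) - a := by ring
    rw [this]
    exact Ideal.sub_mem _ h1 ha
  exact hsnp (hp.mem_of_pow_mem _ hsnp')
end Main

open IsLocalRing in
theorem stmt10 (R : Type*) [CommRing R] [IsNoetherianRing R] [IsLocalRing R]
    [IsAdicComplete (maximalIdeal R) R]
    (N : Type*) [AddCommGroup N] [Module R N] [Module.Finite R N] [Nontrivial N]
    (p : Ideal R) (hp : p.IsPrime) (hpsupp : Module.annihilator R N ≤ p)
    (hdim : ringKrullDim (R ⧸ p) = 1) :
    symbEquivAdic R p N ↔ ∀ z ∈ associatedPrimes R N, z ≤ p := by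
  have hpmax : ∀ q : Ideal R, q.IsPrime → p < q → q = maximalIdeal R :=
    fun q hq hlt => prime_lt_eq_max hp hq hdim hlt
  have hmAssEq : mAss R (N ⧸ (p • ⊤ : Submodule R N)) = {p} := mAss_quot_eq hp hpsupp
  constructor
  · intro hequiv z hz
    by_contra hzp
    obtain ⟨s₀, hs₀z, hs₀p⟩ := SetLike.not_le_iff_exists.mp hzp
    obtain ⟨hzprime, x, hxz⟩ := hz
    have hx0 : x ≠ 0 := by
      rintro rfl
      apply hzprime.ne_top
      rw [hxz, eq_top_iff]
      intro a _
      apply Ideal.le_radical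
      rw [Submodule.mem_colon_singleton]
      simp
    obtain ⟨k, hs₀x⟩ : ∃ k : ℕ, s₀ ^ k • x = 0 := by
      obtain ⟨k, hk⟩ : s₀ ∈ ((⊥ : Submodule R N).colon {x}).radical := hxz ▸ hs₀z
      exact ⟨k, by rwa [Submodule.mem_colon_singleton, Submodule.mem_bot] at hk⟩
    have hxpn : ∀ n : ℕ, x ∈ (p ^ n • ⊤ : Submodule R N) := by
      intro n
      obtain ⟨m, hm⟩ := hequiv n
      have hmem : x ∈ symbPow R p N m := by
        refine ⟨s₀ ^ k, ?_, ?_⟩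
        · intro q hq
          rw [hmAssEq, Set.mem_singleton_iff] at hq
          rw [hq]; exact fun h => hs₀p (hp.mem_of_pow_mem _ h)
        · rw [hs₀x]; exact Submodule.zero_mem _
      exact hm hmem
    have : x ∈ (⨅ n : ℕ, (p ^ n • ⊤ : Submodule R N)) := Submodule.mem_iInf _ |>.mpr hxpn
    rw [krull_iInf_eq_bot p hp.ne_top N] at this
    exact hx0 (by simpa using this)
  · intro hAss n
    obtain ⟨k, hk⟩ := sat_inf_sup_le (N := N) hp hpmax n
    haveI : IsPrecomplete (maximalIdeal R) N := isPrecomplete_of_finite _ N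
    obtain ⟨m0, hm0⟩ := chevalley (fun j => satSub p hp ((p ^ j • ⊤ : Submodule R N)))
      (fun {a b} hab => satSub_mono p hp (Submodule.smul_mono_left (Ideal.pow_le_pow_right hab)))
      (iInf_sat_eq_bot hp hAss) k
    refine ⟨max m0 n, ?_⟩
    intro x hx
    obtain ⟨s, hsq, hsx⟩ := hx
    have hsp : s ∉ p := hsq p (by rw [hmAssEq]; exact Set.mem_singleton _)
    have hxsat : x ∈ satSub p hp ((p ^ (max m0 n) • ⊤ : Submodule R N)) := ⟨s, hsp, hsx⟩
    have h1 : x ∈ ((maximalIdeal R) ^ k • ⊤ : Submodule R N) :=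
      hm0 (satSub_mono p hp (Submodule.smul_mono_left
        (Ideal.pow_le_pow_right (le_max_left _ _))) hxsat)
    have h2 : x ∈ satSub p hp ((p ^ n • ⊤ : Submodule R N)) :=
      satSub_mono p hp (Submodule.smul_mono_left
        (Ideal.pow_le_pow_right (le_max_right _ _))) hxsat
    exact hk ⟨h2, Submodule.mem_sup_right h1⟩
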